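/- Let Z = [τ₁, τ₂, τ₃] be a bicyclic bitrade in τ-representation. Then there is no bitrade in τ-representation X, point x, and direction j such that slide(X, x, j) = Z or slide(X, x, j) = Z⁻¹. That is, no bicyclic bitrade (nor the inverse of one) arises as the result of a slide expansion. -/

import Mathlib

/-- The set of points moved by a permutation. -/
def mov (σ : Equiv.Perm ℕ) : Set ℕ := {x | σ x ≠ x}

/-- The underlying set `Γ = mov(τ₁) ∪ mov(τ₂) ∪ mov(τ₃)` of a triple of permutations. -/
def Gam (τ : Fin 3 → Equiv.Perm ℕ) : Set ℕ := mov (τ 0) ∪ mov (τ 1) ∪ mov (τ 2)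

/-- A bitrade in τ-representation: a triple `[τ₁, τ₂, τ₃]` of permutations of the
finite set `Γ = mov(τ₁) ∪ mov(τ₂) ∪ mov(τ₃)` (all permutations composed left to
right) satisfying (T1) `τ₁τ₂τ₃ = 1`, (T2) any cycle of `τ_i` and any cycle of `τ_j`
(`i < j`) move at most one common point, and (T3) each `τ_i` is fixed-point-free
on `Γ`. -/
structure IsTauRep (τ : Fin 3 → Equiv.Perm ℕ) : Prop where
  fin : (Gam τ).Finite
  t1 : ∀ x, τ 2 (τ 1 (τ 0 x)) = x
  t2 : ∀ i j : Fin 3, i < j → ∀ x y : ℕ, x ≠ y →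
    ¬((τ i).SameCycle x y ∧ (τ j).SameCycle x y)
  t3 : ∀ i : Fin 3, ∀ x ∈ Gam τ, τ i x ≠ x

/-- The same-cycle setoid on the set of points moved by `σ`;
its classes are the (nontrivial) cycles of `σ`. -/
def cycSetoidOn (σ : Equiv.Perm ℕ) : Setoid (mov σ) :=
  ⟨fun a b => σ.SameCycle a.1 b.1,
    ⟨fun a => Equiv.Perm.SameCycle.refl σ a.1,
     fun h => h.symm, fun h h' => h.trans h'⟩⟩

/-- `zc σ` is the number of cycles of `σ`. -/
noncomputable def zc (σ : Equiv.Perm ℕ) : ℕ := Nat.card (Quotient (cycSetoidOn σ))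

/-- (T4): the group `⟨τ₁, τ₂, τ₃⟩` acts transitively on `Γ`. -/
def TransOn (τ : Fin 3 → Equiv.Perm ℕ) : Prop :=
  ∀ x ∈ Gam τ, ∀ y ∈ Gam τ,
    ∃ g ∈ Subgroup.closure ({τ 0, τ 1, τ 2} : Set (Equiv.Perm ℕ)), g x = y

/-- A spherical bitrade in τ-representation: (T4) holds and the genus defined by
Euler's formula `order = size + 2 - 2g` is zero. -/
def Spherical (τ : Fin 3 → Equiv.Perm ℕ) : Prop :=
  IsTauRep τ ∧ TransOn τ ∧
    zc (τ 0) + zc (τ 1) + zc (τ 2) = Nat.card (Gam τ) + 2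

/-- A bitrade in τ-representation is bicyclic if some `τ_j` has exactly two cycles. -/
def Bicyclic (τ : Fin 3 → Equiv.Perm ℕ) : Prop := ∃ j : Fin 3, zc (τ j) = 2

/-- The inverse `Z⁻¹ = [τ₁⁻¹, τ₂⁻¹, τ₂τ₁]` of a bitrade in τ-representation
(`τ₂τ₁`, composed left to right, is `τ 0 * τ 1` in Lean's convention). -/
def ZInv (τ : Fin 3 → Equiv.Perm ℕ) : Fin 3 → Equiv.Perm ℕ :=
  ![(τ 0)⁻¹, (τ 1)⁻¹, τ 0 * τ 1]

/-- `SlideRel τ x j u τ'` says that `τ'` is the result of the slide expansion of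
`τ` at the point `x ∈ Γ` in direction `j`, with new point `u ∉ Γ`.  Writing
`k = j+1`, `l = j+2`, `w = xτ_j`, `a = xτ_j⁻¹`, `b = wτ_j`, `z = xτ_k`,
`y = wτ_l⁻¹`, the preconditions are that the `τ_j`-cycle through `x` has length at
least 3 and that the `τ_k`-cycle through `x` and the `τ_l`-cycle through `w` have
no common point; the new permutations send `a ↦ u ↦ b`, `x ↦ w ↦ x` (direction `j`),
insert `u` after `x` (direction `k`) and insert `u` between `y` and `w`
(direction `l`), agreeing with the old ones elsewhere. -/
def SlideRel (τ : Fin 3 → Equiv.Perm ℕ) (x : ℕ) (j : Fin 3) (u : ℕ)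
    (τ' : Fin 3 → Equiv.Perm ℕ) : Prop :=
  x ∈ Gam τ ∧ u ∉ Gam τ ∧
  τ j x ≠ x ∧ τ j (τ j x) ≠ x ∧
  (∀ p : ℕ, (τ (j + 1)).SameCycle x p → (τ (j + 2)).SameCycle (τ j x) p → False) ∧
  (τ' j ((τ j)⁻¹ x) = u ∧ τ' j u = τ j (τ j x) ∧
    τ' j x = τ j x ∧ τ' j (τ j x) = x ∧
    ∀ p : ℕ, p ≠ (τ j)⁻¹ x → p ≠ u → p ≠ x → p ≠ τ j x → τ' j p = τ j p) ∧
  (τ' (j + 1) x = u ∧ τ' (j + 1) u = τ (j + 1) x ∧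
    ∀ p : ℕ, p ≠ x → p ≠ u → τ' (j + 1) p = τ (j + 1) p) ∧
  (τ' (j + 2) ((τ (j + 2))⁻¹ (τ j x)) = u ∧ τ' (j + 2) u = τ j x ∧
    ∀ p : ℕ, p ≠ (τ (j + 2))⁻¹ (τ j x) → p ≠ u → τ' (j + 2) p = τ (j + 2) p)

section Aux
open Equiv Equiv.Perm

private lemma sc_conj (g σ : Equiv.Perm ℕ) (p q : ℕ) :
    (g * σ * g⁻¹).SameCycle p q ↔ σ.SameCycle (g⁻¹ p) (g⁻¹ q) := by
  constructor
  · rintro ⟨n, hn⟩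
    refine ⟨n, ?_⟩
    rw [conj_zpow] at hn
    simp only [Equiv.Perm.mul_apply] at hn
    rw [← hn]; simp
  · rintro ⟨n, hn⟩
    refine ⟨n, ?_⟩
    rw [conj_zpow]
    show g ((σ ^ n) (g⁻¹ p)) = q; rw [hn]; simp

private lemma sc_of_apply {σ : Equiv.Perm ℕ} {p q : ℕ} (h : σ p = q) : σ.SameCycle p q :=
  ⟨1, by simpa⟩

private lemma mov_apply {σ : Equiv.Perm ℕ} {p : ℕ} (h : p ∈ mov σ) : σ p ∈ mov σ :=
  fun hc => h (σ.injective hc)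

private lemma gam_eq_mov {τ : Fin 3 → Equiv.Perm ℕ} (h : IsTauRep τ) (i : Fin 3) :
    Gam τ = mov (τ i) := by
  apply Set.Subset.antisymm
  · intro p hp; exact h.t3 i p hp
  · fin_cases i
    · exact fun p hp => Or.inl (Or.inl hp)
    · exact fun p hp => Or.inl (Or.inr hp)
    · exact fun p hp => Or.inr hp

private lemma t2' {τ : Fin 3 → Equiv.Perm ℕ} (h : IsTauRep τ) {i i' : Fin 3} (hne : i ≠ i')
    {p q : ℕ} (hpq : p ≠ q) (h1 : (τ i).SameCycle p q) (h2 : (τ i').SameCycle p q) : False := by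
  rcases lt_or_gt_of_ne hne with hlt | hlt
  · exact h.t2 i i' hlt p q hpq ⟨h1, h2⟩
  · exact h.t2 i' i hlt p q hpq ⟨h2, h1⟩

private lemma orbit_pair {σ : Equiv.Perm ℕ} {x w : ℕ} (h1 : σ x = w) (h2 : σ w = x) :
    ∀ p, σ.SameCycle x p → p = x ∨ p = w := by
  have key : ∀ n : ℤ, (σ ^ n) x = x ∨ (σ ^ n) x = w := by
    intro n
    induction n using Int.induction_on with
    | zero => left; simp
    | succ n ih =>
        have he : σ ^ ((n : ℤ) + 1) = σ * σ ^ (n : ℤ) := by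
          rw [add_comm, zpow_add, zpow_one]
        rw [he, Equiv.Perm.mul_apply]
        rcases ih with e | e <;> rw [e]
        · right; exact h1
        · left; exact h2
    | pred n ih =>
        have he : σ ^ (-(n : ℤ) - 1) = σ⁻¹ * σ ^ (-(n : ℤ)) := by
          rw [sub_eq_add_neg, add_comm, zpow_add, zpow_neg_one]
        rw [he, Equiv.Perm.mul_apply]
        rcases ih with e | e <;> rw [e]
        · right; rw [← h2]; simp
        · left; rw [← h1]; simp
  rintro p ⟨n, hn⟩
  exact hn ▸ key n

private lemma two_classes {σ : Equiv.Perm ℕ} (h : zc σ = 2) {a b c : ℕ} (ha : a ∈ mov σ)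
    (hb : b ∈ mov σ) (hc : c ∈ mov σ) (hab : ¬ σ.SameCycle a b) :
    σ.SameCycle c a ∨ σ.SameCycle c b := by
  rw [zc, Nat.card_eq_two_iff] at h
  obtain ⟨A, B, hAB, huniv⟩ := h
  have mem : ∀ q : Quotient (cycSetoidOn σ), q = A ∨ q = B := by
    intro q
    have : q ∈ ({A, B} : Set _) := huniv ▸ Set.mem_univ q
    simpa using this
  letI := cycSetoidOn σ
  have hqab : (⟦(⟨a, ha⟩ : mov σ)⟧ : Quotient (cycSetoidOn σ)) ≠ ⟦⟨b, hb⟩⟧ :=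
    fun hq => hab (Quotient.exact hq)
  rcases mem ⟦⟨a, ha⟩⟧ with h1 | h1 <;> rcases mem ⟦⟨b, hb⟩⟧ with h2 | h2 <;>
    rcases mem ⟦⟨c, hc⟩⟧ with h3 | h3 <;>
      first
        | exact absurd (h1.trans h2.symm) hqab
        | (left; exact Quotient.exact (h3.trans h1.symm))
        | (right; exact Quotient.exact (h3.trans h2.symm))

private lemma zc_congr {σ τ : Equiv.Perm ℕ} (g : Equiv.Perm ℕ)
    (hmov : ∀ p, σ p = p ↔ τ (g⁻¹ p) = g⁻¹ p)
    (hsc : ∀ p q, σ.SameCycle p q ↔ τ.SameCycle (g⁻¹ p) (g⁻¹ q)) : zc σ = zc τ := by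
  exact Nat.card_congr (Quotient.congr
    ⟨fun a => ⟨g⁻¹ a.1, fun hf => a.2 ((hmov a.1).mpr hf)⟩,
     fun b => ⟨g b.1, fun hf => b.2 (by simpa using (hmov (g b.1)).mp hf)⟩,
     fun a => Subtype.ext (by simp), fun b => Subtype.ext (by simp)⟩
    (fun p q => hsc p.1 q.1))

private lemma zc_inv (σ : Equiv.Perm ℕ) : zc σ⁻¹ = zc σ := by
  refine zc_congr 1 (fun p => ?_) (fun p q => by simp [Equiv.Perm.sameCycle_inv])
  simp only [inv_one, Equiv.Perm.one_apply]
  constructor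
  · intro hf; have := congrArg (⇑σ) hf; simp at this; exact this.symm
  · intro hf; have := congrArg (⇑σ⁻¹) hf; simp at this; exact this.symm

private lemma zc_conj (g σ : Equiv.Perm ℕ) : zc (g * σ * g⁻¹) = zc σ := by
  refine zc_congr g (fun p => ?_) (fun p q => sc_conj g σ p q)
  simp only [Equiv.Perm.mul_apply]
  constructor
  · intro hf; have := congrArg (⇑g⁻¹) hf; simpa using this
  · intro hf; rw [hf]; simp

end Aux

section ZInvLemmas
open Equiv Equiv.Perm
variable {Z : Fin 3 → Equiv.Perm ℕ}

private lemma fixed_inv_iff (σ : Equiv.Perm ℕ) (p : ℕ) : σ⁻¹ p = p ↔ σ p = p := by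
  constructor
  · intro hf; have := congrArg (⇑σ) hf; simp at this; exact this.symm
  · intro hf; have := congrArg (⇑σ⁻¹) hf; simp at this; exact this.symm

private lemma hmul (h : IsTauRep Z) : Z 2 * Z 1 * Z 0 = 1 :=
  Equiv.ext fun p => by simpa [Equiv.Perm.mul_apply] using h.t1 p

private lemma hZ1eq (h : IsTauRep Z) : Z 1 = (Z 2)⁻¹ * (Z 0)⁻¹ := by
  have h0 := eq_inv_of_mul_eq_one_left (hmul h)
  rw [← h0]; group

private lemma hZ0eq (h : IsTauRep Z) : Z 0 = (Z 1)⁻¹ * (Z 2)⁻¹ := by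
  have h0 := eq_inv_of_mul_eq_one_left (hmul h)
  rw [← mul_inv_rev, h0, inv_inv]

private lemma h01a (h : IsTauRep Z) : Z 0 * Z 1 = Z 0 * (Z 2)⁻¹ * (Z 0)⁻¹ := by
  rw [hZ1eq h]; group

private lemma h01b (h : IsTauRep Z) : Z 0 * Z 1 = (Z 1)⁻¹ * (Z 2)⁻¹ * ((Z 1)⁻¹)⁻¹ := by
  rw [hZ0eq h]; group

private lemma gam_zinv_sub : Gam (ZInv Z) ⊆ Gam Z := by
  intro p hp
  simp only [Gam, Set.mem_union] at hp ⊢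
  rcases hp with (hp | hp) | hp
  · left; left; exact fun hf => hp ((fixed_inv_iff _ _).mpr hf)
  · left; right; exact fun hf => hp ((fixed_inv_iff _ _).mpr hf)
  · by_contra hn
    push_neg at hn
    have e0 : Z 0 p = p := not_not.mp (fun hc => hn.1.1 hc)
    have e1 : Z 1 p = p := not_not.mp (fun hc => hn.1.2 hc)
    exact hp (show (Z 0 * Z 1) p = p by simp [Equiv.Perm.mul_apply, e0, e1])

private lemma t3_zinv (h : IsTauRep Z) : ∀ i : Fin 3, ∀ p ∈ Gam (ZInv Z), ZInv Z i p ≠ p := by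
  intro i p hp
  have hpΓ : p ∈ Gam Z := gam_zinv_sub hp
  fin_cases i
  · exact fun hf => h.t3 0 p hpΓ ((fixed_inv_iff _ _).mp hf)
  · exact fun hf => h.t3 1 p hpΓ ((fixed_inv_iff _ _).mp hf)
  · intro hf
    have hf' : Z 0 (Z 1 p) = p := hf
    have hq : Z 1 p ∈ Gam Z := by
      rw [gam_eq_mov h 1] at hpΓ ⊢; exact mov_apply hpΓ
    rw [hZ0eq h] at hf'
    simp only [Equiv.Perm.mul_apply] at hf'
    have h2 : (Z 2)⁻¹ (Z 1 p) = Z 1 p := by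
      have := congrArg (⇑(Z 1)) hf'; simpa using this
    exact h.t3 2 _ hq ((fixed_inv_iff _ _).mp h2)

private lemma t2_zinv (h : IsTauRep Z) : ∀ i i' : Fin 3, i < i' → ∀ p q : ℕ, p ≠ q →
    ¬((ZInv Z i).SameCycle p q ∧ (ZInv Z i').SameCycle p q) := by
  rintro i i' hlt p q hpq ⟨s1, s2⟩
  fin_cases i <;> fin_cases i' <;> try exact absurd hlt (by decide)
  · -- (0,1)
    exact h.t2 0 1 (by decide) p q hpq
      ⟨Equiv.Perm.sameCycle_inv.mp s1, Equiv.Perm.sameCycle_inv.mp s2⟩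
  · -- (0,2)
    have s2' : (Z 2).SameCycle ((Z 0)⁻¹ p) ((Z 0)⁻¹ q) := by
      have hs : (Z 0 * Z 1).SameCycle p q := s2
      rw [h01a h] at hs
      exact Equiv.Perm.sameCycle_inv.mp ((sc_conj _ _ _ _).mp hs)
    have s1' : (Z 0).SameCycle ((Z 0)⁻¹ p) ((Z 0)⁻¹ q) := by
      have b1 : (Z 0).SameCycle ((Z 0)⁻¹ p) p := sc_of_apply (by simp)
      have b2 : (Z 0).SameCycle ((Z 0)⁻¹ q) q := sc_of_apply (by simp)
      exact (b1.trans (Equiv.Perm.sameCycle_inv.mp s1)).trans b2.symm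
    exact h.t2 0 2 (by decide) _ _
      (fun hc => hpq (by simpa using congrArg (⇑(Z 0)) hc)) ⟨s1', s2'⟩
  · -- (1,2)
    have s2' : (Z 2).SameCycle (Z 1 p) (Z 1 q) := by
      have hs : (Z 0 * Z 1).SameCycle p q := s2
      rw [h01b h] at hs
      have := (sc_conj ((Z 1)⁻¹) ((Z 2)⁻¹) p q).mp hs
      simp only [inv_inv] at this
      exact Equiv.Perm.sameCycle_inv.mp this
    have s1' : (Z 1).SameCycle (Z 1 p) (Z 1 q) := by
      have s1'' := Equiv.Perm.sameCycle_inv.mp s1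
      have b1 : (Z 1).SameCycle (Z 1 p) p := (sc_of_apply rfl).symm
      have b2 : (Z 1).SameCycle q (Z 1 q) := sc_of_apply rfl
      exact (b1.trans s1'').trans b2
    exact h.t2 1 2 (by decide) _ _
      (fun hc => hpq ((Z 1).injective hc)) ⟨s1', s2'⟩

private lemma isTauRep_zinv (h : IsTauRep Z) : IsTauRep (ZInv Z) := by
  refine ⟨h.fin.subset gam_zinv_sub, ?_, t2_zinv h, t3_zinv h⟩
  intro p
  show (Z 0 * Z 1) ((Z 1)⁻¹ ((Z 0)⁻¹ p)) = p
  simp [Equiv.Perm.mul_apply]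

private lemma bicyclic_zinv (h : IsTauRep Z) (hb : Bicyclic Z) : Bicyclic (ZInv Z) := by
  obtain ⟨i, hi⟩ := hb
  refine ⟨i, ?_⟩
  fin_cases i
  · exact (zc_inv (Z 0)).trans hi
  · exact (zc_inv (Z 1)).trans hi
  · show zc (Z 0 * Z 1) = 2
    rw [h01a h, zc_conj, zc_inv]
    exact hi

end ZInvLemmas

section Main
open Equiv Equiv.Perm

private lemma no_slide (W : Fin 3 → Equiv.Perm ℕ) (hW : IsTauRep W) (hbW : Bicyclic W)
    (X : Fin 3 → Equiv.Perm ℕ) (hX : IsTauRep X) (x : ℕ) (j : Fin 3) (u : ℕ)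
    (hs : SlideRel X x j u W) : False := by
  obtain ⟨hxΓ, huΓ, h1, h2, hpre, ⟨hja, hju, hjx, hjw, hjo⟩, ⟨hkx, hku, hko⟩,
    ⟨hly, hlu, hlo⟩⟩ := hs
  set k := j + 1 with hk
  set l := j + 2 with hl
  set w := X j x with hw
  set z := X k x with hz
  set y := (X l)⁻¹ w with hy
  have hjk : j ≠ k := ((by decide : ∀ j : Fin 3, j ≠ j + 1 ∧ j ≠ j + 2 ∧ j + 1 ≠ j + 2) j).1
  have hjl : j ≠ l := ((by decide : ∀ j : Fin 3, j ≠ j + 1 ∧ j ≠ j + 2 ∧ j + 1 ≠ j + 2) j).2.1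
  have hkl : k ≠ l := ((by decide : ∀ j : Fin 3, j ≠ j + 1 ∧ j ≠ j + 2 ∧ j + 1 ≠ j + 2) j).2.2
  have hwx : w ≠ x := h1
  have hxmovj : x ∈ mov (X j) := fun hc => hwx (hw.trans hc)
  have hwΓX : w ∈ Gam X := by
    rw [gam_eq_mov hX j]
    exact hw ▸ mov_apply hxmovj
  have huX : ∀ p ∈ Gam X, p ≠ u := fun p hp he => huΓ (he ▸ hp)
  have hzΓX : z ∈ Gam X := by
    rw [gam_eq_mov hX k]
    exact hz ▸ mov_apply (hX.t3 k x hxΓ)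
  have hyw : X l y = w := by rw [hy]; exact Equiv.apply_symm_apply _ _
  have hyne_w : y ≠ w := fun he => hX.t3 l w hwΓX (he ▸ hyw)
  have hyΓX : y ∈ Gam X := by
    rw [gam_eq_mov hX l]
    show X l y ≠ y
    rw [hyw]
    exact fun he => hyne_w he.symm
  have hzx : z ≠ x := hz ▸ hX.t3 k x hxΓ
  have scXxw : (X j).SameCycle x w := sc_of_apply hw.symm
  have scXxz : (X k).SameCycle x z := sc_of_apply hz.symm
  have scXwy : (X l).SameCycle w y := (sc_of_apply hyw).symm
  have hzw : z ≠ w := by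
    intro he
    have : (X j).SameCycle x z := by rw [he]; exact scXxw
    exact t2' hX hjk (Ne.symm hzx) this scXxz
  have hyx : y ≠ x := by
    intro he
    have : (X l).SameCycle w x := by rw [← he]; exact scXwy
    exact hpre x (Equiv.Perm.SameCycle.refl _ _) this
  have hzy : z ≠ y := by
    intro he
    have : (X l).SameCycle w z := by rw [he]; exact scXwy
    exact hpre z scXxz this
  have hbΓX : X j w ∈ Gam X := by
    rw [gam_eq_mov hX j]
    exact mov_apply (hX.t3 j w hwΓX)
  have haΓX : (X j)⁻¹ x ∈ Gam X := by
    rw [gam_eq_mov hX j]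
    show X j ((X j)⁻¹ x) ≠ (X j)⁻¹ x
    rw [show X j ((X j)⁻¹ x) = x from Equiv.apply_symm_apply _ _]
    intro he
    exact hX.t3 j x hxΓ (by nth_rewrite 1 [he]; exact Equiv.apply_symm_apply _ _)
  -- same-cycle facts in W
  have scWjxw : (W j).SameCycle x w := sc_of_apply hjx
  have scWkxu : (W k).SameCycle x u := sc_of_apply hkx
  have scWkuz : (W k).SameCycle u z := sc_of_apply hku
  have scWlyu : (W l).SameCycle y u := sc_of_apply hly
  have scWluw : (W l).SameCycle u w := sc_of_apply hlu
  have horb : ∀ p, (W j).SameCycle x p → p = x ∨ p = w := orbit_pair hjx hjw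
  have nWkxw : ¬ (W k).SameCycle x w := fun hc => t2' hW hjk (Ne.symm hwx) scWjxw hc
  have nWlxw : ¬ (W l).SameCycle x w := fun hc => t2' hW hjl (Ne.symm hwx) scWjxw hc
  -- membership in mov of W's components
  have mWjx : x ∈ mov (W j) := by show W j x ≠ x; rw [hjx]; exact hwx
  have mWjw : w ∈ mov (W j) := by show W j w ≠ w; rw [hjw]; exact Ne.symm hwx
  have mWju : u ∈ mov (W j) := by show W j u ≠ u; rw [hju]; exact huX _ hbΓX
  have mWjz : z ∈ mov (W j) := by
    show W j z ≠ z
    by_cases hza : z = (X j)⁻¹ x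
    · rw [hza, hja]; exact Ne.symm (huX _ haΓX)
    · rw [hjo z hza (huX z hzΓX) hzx hzw]; exact hX.t3 j z hzΓX
  have mWkx : x ∈ mov (W k) := by show W k x ≠ x; rw [hkx]; exact Ne.symm (huX x hxΓ)
  have mWkw : w ∈ mov (W k) := by
    show W k w ≠ w; rw [hko w hwx (huX w hwΓX)]; exact hX.t3 k w hwΓX
  have mWky : y ∈ mov (W k) := by
    show W k y ≠ y; rw [hko y hyx (huX y hyΓX)]; exact hX.t3 k y hyΓX
  have mWlx : x ∈ mov (W l) := by
    show W l x ≠ x; rw [hlo x (Ne.symm hyx) (huX x hxΓ)]; exact hX.t3 l x hxΓ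
  have mWlw : w ∈ mov (W l) := by
    show W l w ≠ w; rw [hlo w (Ne.symm hyne_w) (huX w hwΓX)]; exact hX.t3 l w hwΓX
  have mWlz : z ∈ mov (W l) := by
    show W l z ≠ z; rw [hlo z hzy (huX z hzΓX)]; exact hX.t3 l z hzΓX
  -- case analysis on which component of W has two cycles
  obtain ⟨i, hzc⟩ := hbW
  rcases (by decide : ∀ i j : Fin 3, i = j ∨ i = j + 1 ∨ i = j + 2) i j with hij | hij | hij <;>
    rw [hij] at hzc
  · -- zc (W j) = 2
    have nxu : ¬ (W j).SameCycle x u := by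
      intro hc
      rcases horb u hc with e | e
      · exact huX x hxΓ e.symm
      · exact huX w hwΓX e.symm
    rcases two_classes hzc mWjx mWju mWjz nxu with hc | hc
    · rcases horb z hc.symm with e | e
      · exact hzx e
      · exact hzw e
    · exact t2' hW hjk (huX z hzΓX) hc scWkuz.symm
  · -- zc (W k) = 2
    rcases two_classes hzc mWkx mWkw mWky nWkxw with hc | hc
    · exact t2' hW hkl (huX y hyΓX) (hc.trans scWkxu) scWlyu
    · exact t2' hW hkl hyne_w hc (scWlyu.trans scWluw)
  · -- zc (W l) = 2
    rcases two_classes hzc mWlx mWlw mWlz nWlxw with hc | hc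
    · exact t2' hW hkl hzx (scWkxu.trans scWkuz).symm hc
    · exact t2' hW hkl (huX z hzΓX) scWkuz.symm (hc.trans scWluw.symm)

end Main


/-- Corollary. No bicyclic bitrade in τ-representation, nor the
inverse of one, arises as the result of a slide expansion: if `Z` is bicyclic then
there is no bitrade `X` in τ-representation, point `x`, direction `j` and new point
`u` with `slide(X, x, j) = Z` or `slide(X, x, j) = Z⁻¹`. -/
theorem bicyclic_has_no_slide_parent (Z : Fin 3 → Equiv.Perm ℕ)
    (h : IsTauRep Z) (hb : Bicyclic Z) :
    ¬∃ (X : Fin 3 → Equiv.Perm ℕ) (x : ℕ) (j : Fin 3) (u : ℕ),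
      IsTauRep X ∧ (SlideRel X x j u Z ∨ SlideRel X x j u (ZInv Z)) := by

  rintro ⟨X, x, j, u, hX, hs | hs⟩
  · exact no_slide Z h hb X hX x j u hs
  · exact no_slide (ZInv Z) (isTauRep_zinv h) (bicyclic_zinv h hb) X hX x j u hs
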